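/- arXiv:1809.07432 — 2 statements merged into one kernel-verified Lean document; each statement's English description precedes it below -/
import Mathlib

section
/- The set of functions Q̃ : Ω → ℝ (Ω ⊆ ℝᵈ open) that are C⁴, uniformly convex (D²Q̃ ≥ ε₀ I for some ε₀ > 0 allowed to depend on Q̃), and satisfy condition (H2c): Σ (D⁴_{ijrs}Q̃) Q̃^{rk}Q̃^{sl} ξ_kξ_lη_iη_j ≤ 0 for all ξ, η ∈ ℝᵈ, is convex: if Q̃ and Q̃′ both belong to this set, then so does τQ̃ + (1−τ)Q̃′ for every τ ∈ [0,1]. -/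
noncomputable section

/-- Partial derivative in the `k`-th coordinate direction. -/
def pd {d : ℕ} (k : Fin d) (f : (Fin d → ℝ) → ℝ) (z : Fin d → ℝ) : ℝ :=
  fderiv ℝ f z (Pi.single k 1)

/-- Hessian matrix. -/
def Hess {d : ℕ} (f : (Fin d → ℝ) → ℝ) (z : Fin d → ℝ) : Matrix (Fin d) (Fin d) ℝ :=
  Matrix.of fun i j => pd i (fun w => pd j f w) z

/-- Fourth partial derivatives. -/
def D4 {d : ℕ} (f : (Fin d → ℝ) → ℝ) (a b c e : Fin d) (z : Fin d → ℝ) : ℝ :=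
  pd a (fun w => pd b (fun w' => pd c (fun w'' => pd e f w'') w') w) z

/-- A potential on `Ω` is good if it is `C⁴`, uniformly convex, and satisfies (H2c):
`Σ (D⁴_{ijrs}Q̃) Q̃^{rk} Q̃^{sl} ξ_k ξ_l η_i η_j ≤ 0` for all `ξ, η`. -/
def GoodPotential {d : ℕ} (Ω : Set (Fin d → ℝ)) (f : (Fin d → ℝ) → ℝ) : Prop :=
  ContDiffOn ℝ 4 f Ω ∧
  (∃ ε₀ > 0, ∀ z ∈ Ω, ∀ v : Fin d → ℝ,
    ε₀ * ∑ i, v i ^ 2 ≤ ∑ i, ∑ j, Hess f z i j * v i * v j) ∧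
  (∀ z ∈ Ω, ∀ ξ η : Fin d → ℝ,
    (∑ i, ∑ j, ∑ k, ∑ l,
      (∑ r, ∑ s, D4 f i j r s z * (Hess f z)⁻¹ r k * (Hess f z)⁻¹ s l)
        * ξ k * ξ l * η i * η j) ≤ 0)

open Matrix

/-- smoothness of a partial derivative -/
lemma pd_contDiffOn {d : ℕ} {Ω : Set (Fin d → ℝ)} (hΩ : IsOpen Ω)
    {f : (Fin d → ℝ) → ℝ} {m n : WithTop ℕ∞} (hf : ContDiffOn ℝ n f Ω)
    (hmn : m + 1 ≤ n) (k : Fin d) : ContDiffOn ℝ m (pd k f) Ω :=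
  (hf.fderiv_of_isOpen hΩ hmn).clm_apply contDiffOn_const

/-- linearity of a partial derivative -/
lemma pd_comb {d : ℕ} {Ω : Set (Fin d → ℝ)} (hΩ : IsOpen Ω)
    {F G H : (Fin d → ℝ) → ℝ} {n : WithTop ℕ∞} (hn : 1 ≤ n)
    (hF : ContDiffOn ℝ n F Ω) (hG : ContDiffOn ℝ n G Ω) (a b : ℝ)
    (hH : ∀ w ∈ Ω, H w = a * F w + b * G w) (k : Fin d) :
    ∀ z ∈ Ω, pd k H z = a * pd k F z + b * pd k G z := by
  intro z hz
  have hdF : DifferentiableAt ℝ F z := (hF.contDiffAt (hΩ.mem_nhds hz)).differentiableAt (lt_of_lt_of_le zero_lt_one hn).ne'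
  have hdG : DifferentiableAt ℝ G z := (hG.contDiffAt (hΩ.mem_nhds hz)).differentiableAt (lt_of_lt_of_le zero_lt_one hn).ne'
  have heq : H =ᶠ[nhds z] fun w => a * F w + b * G w :=
    Filter.eventuallyEq_of_mem (hΩ.mem_nhds hz) hH
  unfold pd
  rw [heq.fderiv_eq, fderiv_fun_add (hdF.const_mul a) (hdG.const_mul b),
    fderiv_const_mul hdF a, fderiv_const_mul hdG b]
  simp

lemma swap4 {d : ℕ} (F : Fin d → Fin d → Fin d → Fin d → ℝ) :
    ∑ k : Fin d, ∑ l, ∑ r, ∑ s, F k l r s = ∑ r, ∑ s, ∑ k, ∑ l, F k l r s := by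
  rw [show (∑ k : Fin d, ∑ l, ∑ r, ∑ s, F k l r s) = ∑ k, ∑ r, ∑ l, ∑ s, F k l r s from
      Finset.sum_congr rfl fun k _ => Finset.sum_comm, Finset.sum_comm]
  refine Finset.sum_congr rfl fun r _ => ?_
  rw [show (∑ k : Fin d, ∑ l, ∑ s, F k l r s) = ∑ k, ∑ s, ∑ l, F k l r s from
      Finset.sum_congr rfl fun k _ => Finset.sum_comm, Finset.sum_comm]

lemma key_eq {d : ℕ} (D : Fin d → Fin d → Fin d → Fin d → ℝ)
    (M : Matrix (Fin d) (Fin d) ℝ) (ξ η : Fin d → ℝ) :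
    (∑ i, ∑ j, ∑ k, ∑ l, (∑ r, ∑ s, D i j r s * M r k * M s l)
        * ξ k * ξ l * η i * η j)
    = ∑ i, ∑ j, ∑ r, ∑ s, D i j r s * (M *ᵥ ξ) r * (M *ᵥ ξ) s * η i * η j := by
  refine Finset.sum_congr rfl fun i _ => Finset.sum_congr rfl fun j _ => ?_
  have : (∑ k, ∑ l, (∑ r, ∑ s, D i j r s * M r k * M s l) * ξ k * ξ l * η i * η j)
      = ∑ k, ∑ l, ∑ r, ∑ s, D i j r s * M r k * M s l * ξ k * ξ l * η i * η j := by
    refine Finset.sum_congr rfl fun k _ => Finset.sum_congr rfl fun l _ => ?_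
    simp [Finset.sum_mul]
  rw [this, swap4 (fun k l r s => D i j r s * M r k * M s l * ξ k * ξ l * η i * η j)]
  refine Finset.sum_congr rfl fun r _ => Finset.sum_congr rfl fun s _ => ?_
  simp only [Matrix.mulVec, dotProduct, Finset.mul_sum, Finset.sum_mul]
  rw [Finset.sum_comm]
  refine Finset.sum_congr rfl fun k _ => Finset.sum_congr rfl fun l _ => by ring

lemma isUnit_of_posdef {d : ℕ} {M : Matrix (Fin d) (Fin d) ℝ} {ε : ℝ} (hε : 0 < ε)
    (h : ∀ v : Fin d → ℝ, ε * ∑ i, v i ^ 2 ≤ ∑ i, ∑ j, M i j * v i * v j) :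
    IsUnit M := by
  rw [← Matrix.mulVec_injective_iff_isUnit]
  intro x y hxy
  have hker : M *ᵥ (x - y) = 0 := by
    rw [Matrix.mulVec_sub, hxy, sub_self]
  set w := x - y with hw
  have hq : (∑ i, ∑ j, M i j * w i * w j) = 0 := by
    have : ∀ i, (∑ j, M i j * w i * w j) = w i * (M *ᵥ w) i := by
      intro i
      simp only [Matrix.mulVec, dotProduct, Finset.mul_sum]
      exact Finset.sum_congr rfl fun j _ => by ring
    rw [Finset.sum_congr rfl fun i _ => this i]
    simp [hker]
  have h2 := h w
  rw [hq] at h2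
  have hs : (∑ i, w i ^ 2) = 0 := by
    have hnn : (0:ℝ) ≤ ∑ i, w i ^ 2 := Finset.sum_nonneg fun i _ => sq_nonneg _
    nlinarith
  have : ∀ i, w i = 0 := by
    intro i
    have := (Finset.sum_eq_zero_iff_of_nonneg (fun i _ => sq_nonneg (w i))).1 hs i
      (Finset.mem_univ i)
    exact (pow_eq_zero_iff two_ne_zero).1 this
  have : w = 0 := funext this
  rw [hw, sub_eq_zero] at this
  exact this

/-- The set of `C⁴`, uniformly convex potentials satisfying (H2c) is convex. -/
theorem stmt7 {d : ℕ} (Ω : Set (Fin d → ℝ)) (hΩ : IsOpen Ω)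
    (f g : (Fin d → ℝ) → ℝ) (hf : GoodPotential Ω f) (hg : GoodPotential Ω g)
    (τ : ℝ) (hτ : τ ∈ Set.Icc (0 : ℝ) 1) :
    GoodPotential Ω (fun z => τ * f z + (1 - τ) * g z) := by
  obtain ⟨hf4, ⟨εf, hεf, hfc⟩, hfH⟩ := hf
  obtain ⟨hg4, ⟨εg, hεg, hgc⟩, hgH⟩ := hg
  obtain ⟨hτ0, hτ1⟩ := hτ
  have hτ0' : (0:ℝ) ≤ 1 - τ := by linarith
  set h : (Fin d → ℝ) → ℝ := fun z => τ * f z + (1 - τ) * g z with hdef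
  have hh4 : ContDiffOn ℝ 4 h Ω := (contDiffOn_const.mul hf4).add (contDiffOn_const.mul hg4)
  -- derivative combination chain
  have h0 : ∀ w ∈ Ω, h w = τ * f w + (1 - τ) * g w := fun _ _ => rfl
  have hf3 : ∀ s, ContDiffOn ℝ 3 (pd s f) Ω :=
    fun s => pd_contDiffOn hΩ hf4 (by norm_num) s
  have hg3 : ∀ s, ContDiffOn ℝ 3 (pd s g) Ω :=
    fun s => pd_contDiffOn hΩ hg4 (by norm_num) s
  have hf2 : ∀ r s, ContDiffOn ℝ 2 (fun w => pd r (fun w' => pd s f w') w) Ω :=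
    fun r s => pd_contDiffOn hΩ (hf3 s) (by norm_num) r
  have hg2 : ∀ r s, ContDiffOn ℝ 2 (fun w => pd r (fun w' => pd s g w') w) Ω :=
    fun r s => pd_contDiffOn hΩ (hg3 s) (by norm_num) r
  have hf1 : ∀ q r s, ContDiffOn ℝ 1 (fun w => pd q (fun w' => pd r (fun w'' => pd s f w'') w') w) Ω :=
    fun q r s => pd_contDiffOn hΩ (hf2 r s) (by norm_num) q
  have hg1 : ∀ q r s, ContDiffOn ℝ 1 (fun w => pd q (fun w' => pd r (fun w'' => pd s g w'') w') w) Ω :=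
    fun q r s => pd_contDiffOn hΩ (hg2 r s) (by norm_num) q
  have h1 : ∀ s, ∀ z ∈ Ω, pd s h z = τ * pd s f z + (1 - τ) * pd s g z :=
    fun s => pd_comb hΩ (by norm_num) hf4 hg4 τ (1 - τ) h0 s
  have h2 : ∀ r s, ∀ z ∈ Ω,
      pd r (fun w => pd s h w) z
        = τ * pd r (fun w => pd s f w) z + (1 - τ) * pd r (fun w => pd s g w) z :=
    fun r s => pd_comb hΩ (by norm_num) (hf3 s) (hg3 s) τ (1 - τ) (h1 s) r
  have h3 : ∀ q r s, ∀ z ∈ Ω,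
      pd q (fun w => pd r (fun w' => pd s h w') w) z
        = τ * pd q (fun w => pd r (fun w' => pd s f w') w) z
          + (1 - τ) * pd q (fun w => pd r (fun w' => pd s g w') w) z :=
    fun q r s => pd_comb hΩ (by norm_num) (hf2 r s) (hg2 r s) τ (1 - τ) (h2 r s) q
  have h4 : ∀ p q r s, ∀ z ∈ Ω,
      D4 h p q r s z = τ * D4 f p q r s z + (1 - τ) * D4 g p q r s z :=
    fun p q r s => pd_comb hΩ (by norm_num) (hf1 q r s) (hg1 q r s) τ (1 - τ) (h3 q r s) p
  have hHess : ∀ z ∈ Ω, ∀ i j, Hess h z i j = τ * Hess f z i j + (1 - τ) * Hess g z i j :=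
    fun z hz i j => h2 i j z hz
  -- quadratic form of the combination
  have hquad : ∀ z ∈ Ω, ∀ v : Fin d → ℝ,
      (∑ i, ∑ j, Hess h z i j * v i * v j)
        = τ * (∑ i, ∑ j, Hess f z i j * v i * v j)
          + (1 - τ) * (∑ i, ∑ j, Hess g z i j * v i * v j) := by
    intro z hz v
    rw [Finset.mul_sum, Finset.mul_sum, ← Finset.sum_add_distrib]
    refine Finset.sum_congr rfl fun i _ => ?_
    rw [Finset.mul_sum, Finset.mul_sum, ← Finset.sum_add_distrib]
    refine Finset.sum_congr rfl fun j _ => ?_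
    rw [hHess z hz i j]; ring
  refine ⟨hh4, ⟨min εf εg, lt_min hεf hεg, ?_⟩, ?_⟩
  · intro z hz v
    have hS : (0:ℝ) ≤ ∑ i, v i ^ 2 := Finset.sum_nonneg fun i _ => sq_nonneg _
    have hA := hfc z hz v
    have hB := hgc z hz v
    rw [hquad z hz v]
    have h1' : min εf εg ≤ εf := min_le_left _ _
    have h2' : min εf εg ≤ εg := min_le_right _ _
    nlinarith [mul_le_mul_of_nonneg_left hA hτ0, mul_le_mul_of_nonneg_left hB hτ0',
      mul_le_mul_of_nonneg_right h1' hS, mul_le_mul_of_nonneg_right h2' hS]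
  · intro z hz ξ η
    -- invertibility
    have hUh : IsUnit (Hess h z) := isUnit_of_posdef (lt_min hεf hεg) (by
      intro v
      rw [hquad z hz v]
      have hS : (0:ℝ) ≤ ∑ i, v i ^ 2 := Finset.sum_nonneg fun i _ => sq_nonneg _
      have hA := hfc z hz v
      have hB := hgc z hz v
      nlinarith [mul_le_mul_of_nonneg_left hA hτ0, mul_le_mul_of_nonneg_left hB hτ0',
        mul_le_mul_of_nonneg_right (min_le_left εf εg) hS,
        mul_le_mul_of_nonneg_right (min_le_right εf εg) hS])
    have hUf : IsUnit (Hess f z) := isUnit_of_posdef hεf (hfc z hz)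
    have hUg : IsUnit (Hess g z) := isUnit_of_posdef hεg (hgc z hz)
    set ζ : Fin d → ℝ := (Hess h z)⁻¹ *ᵥ ξ with hζ
    -- the claim that the "linear" form is nonpositive for f
    have claimf : (∑ i, ∑ j, ∑ r, ∑ s, D4 f i j r s z * ζ r * ζ s * η i * η j) ≤ 0 := by
      have hcan : (Hess f z)⁻¹ *ᵥ (Hess f z *ᵥ ζ) = ζ := by
        rw [Matrix.mulVec_mulVec, Matrix.nonsing_inv_mul _ ((Matrix.isUnit_iff_isUnit_det _).1 hUf), Matrix.one_mulVec]
      have := hfH z hz (Hess f z *ᵥ ζ) η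
      rwa [key_eq (fun i j r s => D4 f i j r s z) ((Hess f z)⁻¹) (Hess f z *ᵥ ζ) η, hcan] at this
    have claimg : (∑ i, ∑ j, ∑ r, ∑ s, D4 g i j r s z * ζ r * ζ s * η i * η j) ≤ 0 := by
      have hcan : (Hess g z)⁻¹ *ᵥ (Hess g z *ᵥ ζ) = ζ := by
        rw [Matrix.mulVec_mulVec, Matrix.nonsing_inv_mul _ ((Matrix.isUnit_iff_isUnit_det _).1 hUg), Matrix.one_mulVec]
      have := hgH z hz (Hess g z *ᵥ ζ) η
      rwa [key_eq (fun i j r s => D4 g i j r s z) ((Hess g z)⁻¹) (Hess g z *ᵥ ζ) η, hcan] at this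
    rw [key_eq (fun i j r s => D4 h i j r s z) ((Hess h z)⁻¹) ξ η]
    have hsplit : (∑ i, ∑ j, ∑ r, ∑ s, D4 h i j r s z * ζ r * ζ s * η i * η j)
        = τ * (∑ i, ∑ j, ∑ r, ∑ s, D4 f i j r s z * ζ r * ζ s * η i * η j)
          + (1 - τ) * (∑ i, ∑ j, ∑ r, ∑ s, D4 g i j r s z * ζ r * ζ s * η i * η j) := by
      rw [Finset.mul_sum, Finset.mul_sum, ← Finset.sum_add_distrib]
      refine Finset.sum_congr rfl fun i _ => ?_
      rw [Finset.mul_sum, Finset.mul_sum, ← Finset.sum_add_distrib]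
      refine Finset.sum_congr rfl fun j _ => ?_
      rw [Finset.mul_sum, Finset.mul_sum, ← Finset.sum_add_distrib]
      refine Finset.sum_congr rfl fun r _ => ?_
      rw [Finset.mul_sum, Finset.mul_sum, ← Finset.sum_add_distrib]
      refine Finset.sum_congr rfl fun s _ => ?_
      rw [h4 i j r s z hz]; ring
    rw [← hζ, hsplit]
    have := mul_nonpos_of_nonneg_of_nonpos hτ0 claimf
    have := mul_nonpos_of_nonneg_of_nonpos hτ0' claimg
    linarith
end
end

section
/- Let m ∈ (0,1) and let ξ, η be unit vectors in ℝᵈ, z ∈ ℝᵈ \ {0}. Then the quantity E := 1 − (m/(m−1))(z·η/|z|)² − m(z·ξ/|z|)² + (m(3m−2)/(m−1))(z·ξ/|z|)²(z·η/|z|)² + (m−1)(ξ·η)² is strictly positive. Equivalently, writing E = I + II with I := 1 − m(z·ξ/|z|)² + (m−1)(ξ·η)² and II := (m/(1−m))(z·η/|z|)²[1 − (3m−2)(z·ξ/|z|)²], both I ≥ 0 and II ≥ 0, and they cannot vanish simultaneously. -/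
noncomputable section

private lemma stmt13_aux (m a b e : ℝ) (hm0 : 0 < m) (hm1 : m < 1)
    (ha : a ^ 2 ≤ 1) (he : e ^ 2 ≤ 1)
    (hkey : m * a ^ 2 + (1 - m) * e ^ 2 = 1 → b ^ 2 = 1) :
    let E : ℝ := 1 - (m / (m - 1)) * b ^ 2 - m * a ^ 2
      + (m * (3 * m - 2) / (m - 1)) * a ^ 2 * b ^ 2 + (m - 1) * e ^ 2
    let I : ℝ := 1 - m * a ^ 2 + (m - 1) * e ^ 2
    let II : ℝ := (m / (1 - m)) * b ^ 2 * (1 - (3 * m - 2) * a ^ 2)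
    0 < E ∧ E = I + II ∧ 0 ≤ I ∧ 0 ≤ II ∧ ¬(I = 0 ∧ II = 0) := by
  intro E I II
  have hm1' : (1 : ℝ) - m > 0 := by linarith
  have hm1'' : m - 1 ≠ 0 := by linarith
  have hEeq : E = I + II := by
    show (1 : ℝ) - (m / (m - 1)) * b ^ 2 - m * a ^ 2
      + (m * (3 * m - 2) / (m - 1)) * a ^ 2 * b ^ 2 + (m - 1) * e ^ 2
      = (1 - m * a ^ 2 + (m - 1) * e ^ 2)
        + (m / (1 - m)) * b ^ 2 * (1 - (3 * m - 2) * a ^ 2)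
    field_simp
    ring
  have hbr : 0 < 1 - (3 * m - 2) * a ^ 2 := by nlinarith
  have hI : 0 ≤ I := by
    show (0:ℝ) ≤ 1 - m * a ^ 2 + (m - 1) * e ^ 2
    nlinarith
  have hII : 0 ≤ II := by
    show (0:ℝ) ≤ (m / (1 - m)) * b ^ 2 * (1 - (3 * m - 2) * a ^ 2)
    have : 0 ≤ m / (1 - m) := le_of_lt (div_pos hm0 hm1')
    positivity
  have hnot : ¬(I = 0 ∧ II = 0) := by
    rintro ⟨h1, h2⟩
    have h1' : m * a ^ 2 + (1 - m) * e ^ 2 = 1 := by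
      have : (1:ℝ) - m * a ^ 2 + (m - 1) * e ^ 2 = 0 := h1
      linarith
    have hb2 : b ^ 2 = 1 := hkey h1'
    have h2' : (m / (1 - m)) * b ^ 2 * (1 - (3 * m - 2) * a ^ 2) = 0 := h2
    rw [hb2] at h2'
    have hmd : 0 < m / (1 - m) := div_pos hm0 hm1'
    nlinarith
  refine ⟨?_, hEeq, hI, hII, hnot⟩
  rw [hEeq]
  rcases lt_or_eq_of_le hI with h | h
  · linarith
  rcases lt_or_eq_of_le hII with h' | h'
  · linarith
  · exact absurd ⟨h.symm, h'.symm⟩ hnot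

/-- The bracketed expression in the MTW tensor of the Coulomb-type cost is strictly
positive: for `m ∈ (0,1)`, unit vectors `ξ, η` and `z ≠ 0`, with
`a = z·ξ/|z|`, `b = z·η/|z|`, `e = ξ·η`, the quantity `E` is positive, `E = I + II`,
`I ≥ 0`, `II ≥ 0`, and `I`, `II` cannot vanish simultaneously. -/
theorem stmt13 {d : ℕ} (m : ℝ) (hm : m ∈ Set.Ioo (0 : ℝ) 1)
    (ξ η z : EuclideanSpace ℝ (Fin d)) (hξ : ‖ξ‖ = 1) (hη : ‖η‖ = 1) (hz : z ≠ 0) :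
    let a : ℝ := (inner ℝ z ξ : ℝ) / ‖z‖
    let b : ℝ := (inner ℝ z η : ℝ) / ‖z‖
    let e : ℝ := (inner ℝ ξ η : ℝ)
    let E : ℝ := 1 - (m / (m - 1)) * b ^ 2 - m * a ^ 2
      + (m * (3 * m - 2) / (m - 1)) * a ^ 2 * b ^ 2 + (m - 1) * e ^ 2
    let I : ℝ := 1 - m * a ^ 2 + (m - 1) * e ^ 2
    let II : ℝ := (m / (1 - m)) * b ^ 2 * (1 - (3 * m - 2) * a ^ 2)
    0 < E ∧ E = I + II ∧ 0 ≤ I ∧ 0 ≤ II ∧ ¬(I = 0 ∧ II = 0) := by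
  intro a b e E I II
  obtain ⟨hm0, hm1⟩ := hm
  have hzn : (0:ℝ) < ‖z‖ := norm_pos_iff.mpr hz
  have hξ0 : ξ ≠ 0 := fun h => by simp [h] at hξ
  have hz0 : z ≠ 0 := hz
  have hCSa : |(inner ℝ z ξ : ℝ)| ≤ ‖z‖ := by
    have := abs_real_inner_le_norm z ξ
    rwa [hξ, mul_one] at this
  have hCSe : |(inner ℝ ξ η : ℝ)| ≤ 1 := by
    have := abs_real_inner_le_norm ξ η
    rw [hξ, hη] at this
    simpa using this
  have ha2 : a ^ 2 ≤ 1 := by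
    have h1 : |a| ≤ 1 := by
      show |(inner ℝ z ξ : ℝ) / ‖z‖| ≤ 1
      rw [abs_div, abs_norm]
      exact div_le_one_of_le₀ hCSa (le_of_lt hzn)
    calc a ^ 2 = |a| ^ 2 := (sq_abs a).symm
    _ ≤ 1 := by nlinarith [abs_nonneg a]
  have he2 : e ^ 2 ≤ 1 := by
    calc e ^ 2 = |e| ^ 2 := (sq_abs e).symm
    _ ≤ 1 := by nlinarith [abs_nonneg e]
  have hkey : m * a ^ 2 + (1 - m) * e ^ 2 = 1 → b ^ 2 = 1 := by
    intro h
    have ha1 : a ^ 2 = 1 := by nlinarith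
    have he1 : e ^ 2 = 1 := by nlinarith
    -- equality in Cauchy–Schwarz for z, ξ
    have hza : |(inner ℝ z ξ : ℝ)| = ‖z‖ := by
      have h : ((inner ℝ z ξ : ℝ) / ‖z‖) ^ 2 = 1 := ha1
      have hzn2 : ‖z‖ ^ 2 ≠ 0 := pow_ne_zero _ (ne_of_gt hzn)
      rw [div_pow, div_eq_one_iff_eq hzn2] at h
      rw [← Real.sqrt_sq_eq_abs, h, Real.sqrt_sq hzn.le]
    obtain ⟨r, hr0, hrξ⟩ := (norm_inner_eq_norm_iff (𝕜 := ℝ) hz0 hξ0).mp (by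
      rw [Real.norm_eq_abs, hza, hξ, mul_one])
    -- equality in Cauchy–Schwarz for ξ, η
    have hee : |(inner ℝ ξ η : ℝ)| = 1 := by
      have h : (inner ℝ ξ η : ℝ) ^ 2 = 1 := he1
      rw [← Real.sqrt_sq_eq_abs, h, Real.sqrt_one]
    have hη0 : η ≠ 0 := fun h => by simp [h] at hη
    obtain ⟨s, hs0, hsη⟩ := (norm_inner_eq_norm_iff (𝕜 := ℝ) hξ0 hη0).mp (by
      rw [Real.norm_eq_abs, hee, hξ, hη, mul_one])
    -- now b = s * a, and |s| = 1
    have hs1 : |s| = 1 := by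
      have := hη
      rw [hsη, norm_smul, hξ, mul_one, Real.norm_eq_abs] at this
      exact this
    have hb : b = s * a := by
      show (inner ℝ z η : ℝ) / ‖z‖ = s * ((inner ℝ z ξ : ℝ) / ‖z‖)
      rw [hsη, real_inner_smul_right]
      ring
    rw [hb]
    have : s ^ 2 = 1 := by nlinarith [sq_abs s]
    nlinarith
  exact stmt13_aux m a b e hm0 hm1 ha2 he2 hkey
end
end
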